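/- Let w ∈ S_n and suppose a reduced decomposition of w contains a consecutive substring of the form (i+1, i, i+1, i-1, i, i+1) for some 2 ≤ i ≤ n-2. Then w contains a 4321-pattern: there exist positions a < b < c < d with w(a) > w(b) > w(c) > w(d). -/

import Mathlib

/-- The adjacent transposition `s_i` of `S_n` (1-based: swaps positions `i` and `i+1`). -/
def adjT (n : ℕ) (i : ℕ) : Equiv.Perm (Fin n) :=
  if h : 1 ≤ i ∧ i < n then Equiv.swap ⟨i - 1, by omega⟩ ⟨i, h.2⟩ else 1

/-- The number of inversions of a permutation of `Fin n`. -/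
def invCount (n : ℕ) (w : Equiv.Perm (Fin n)) : ℕ :=
  (Finset.univ.filter fun p : Fin n × Fin n => p.1 < p.2 ∧ w p.2 < w p.1).card

/-- `ρ` is a reduced decomposition of `w`: a word of length `inv(w)` in the letters
`1, …, n-1` whose product of adjacent transpositions is `w`. -/
def IsReducedDecomp (n : ℕ) (w : Equiv.Perm (Fin n)) (ρ : List ℕ) : Prop :=
  (∀ r ∈ ρ, 1 ≤ r ∧ r < n) ∧ (ρ.map (adjT n)).prod = w ∧ ρ.length = invCount n w

/-- A short braid move: swapping two adjacent letters differing by at least 2. -/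
def ShortBraidMove (ρ ρ' : List ℕ) : Prop :=
  ∃ l r : List ℕ, ∃ a b : ℕ, (a + 2 ≤ b ∨ b + 2 ≤ a) ∧
    ρ = l ++ [a, b] ++ r ∧ ρ' = l ++ [b, a] ++ r

/-- Two words are in the same commutation class iff related by short braid moves. -/
def CommEquiv : List ℕ → List ℕ → Prop := Relation.ReflTransGen ShortBraidMove

/-- A long braid move: `(i+1, i, i+1) ↔ (i, i+1, i)` on a consecutive substring. -/
def LongBraidMove (ρ ρ' : List ℕ) : Prop :=
  ∃ l r : List ℕ, ∃ i : ℕ,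
    (ρ = l ++ [i + 1, i, i + 1] ++ r ∧ ρ' = l ++ [i, i + 1, i] ++ r) ∨
    (ρ = l ++ [i, i + 1, i] ++ r ∧ ρ' = l ++ [i + 1, i, i + 1] ++ r)

/-- The number of commutation classes of reduced decompositions of `w`. -/
noncomputable def numCommClasses (n : ℕ) (w : Equiv.Perm (Fin n)) : ℕ :=
  Nat.card (Quot fun a b : {ρ : List ℕ // IsReducedDecomp n w ρ} => CommEquiv a.1 b.1)

/-- The arrangement (position ↦ value) after the first `k` steps of the word `ρ`. -/
def prefixPerm (n : ℕ) (ρ : List ℕ) (k : ℕ) : Equiv.Perm (Fin n) :=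
  ((ρ.take k).map (adjT n)).prod

/-- The word induced by `ρ` on a set `A` of values: record, in order, each step of `ρ`
swapping two values of `A`, labeled (1-based) by the relative position of the swapped
pair among the values of `A`. -/
def inducedWord (n : ℕ) (ρ : List ℕ) (A : Finset (Fin n)) : List ℕ :=
  (List.range ρ.length).filterMap fun k =>
    let u := prefixPerm n ρ k
    let i := ρ.getD k 0
    if h : 1 ≤ i ∧ i < n then
      if u ⟨i - 1, by omega⟩ ∈ A ∧ u ⟨i, h.2⟩ ∈ A then
        some ((A.filter fun x => (u.symm x : ℕ) < i - 1).card + 1)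
      else none
    else none

/-- The number of `(2,1,2)`-subnetworks of `ρ`. -/
def count212 (n : ℕ) (ρ : List ℕ) : ℕ :=
  (Finset.univ.filter fun A : Finset (Fin n) =>
    A.card = 3 ∧ inducedWord n ρ A = [2, 1, 2]).card

/-- The number of 321-patterns of `w`. -/
def N321 (n : ℕ) (w : Equiv.Perm (Fin n)) : ℕ :=
  (Finset.univ.filter fun t : Fin n × Fin n × Fin n =>
    t.1 < t.2.1 ∧ t.2.1 < t.2.2 ∧ w t.2.2 < w t.2.1 ∧ w t.2.1 < w t.1).card

lemma swap_adj_lt {n : ℕ} (p q a b : Fin n) (hpq : (p:ℕ)+1 = q) (hab : a < b)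
    (hne : ¬(a = p ∧ b = q)) : Equiv.swap p q a < Equiv.swap p q b := by
  simp only [Equiv.swap_apply_def]
  rw [Fin.lt_def] at hab ⊢
  split_ifs with h1 h2 h3 h4 h5 h6 h7 h8 <;>
    simp only [Fin.ext_iff] at * <;> omega

lemma invCount_mul_swap {n : ℕ} (π : Equiv.Perm (Fin n)) (p q : Fin n)
    (hpq : (p:ℕ)+1 = q) (h : π p < π q) :
    invCount n (π * Equiv.swap p q) = invCount n π + 1 := by
  set s := Equiv.swap p q with hs
  have hpltq : p < q := Fin.lt_def.mpr (by omega)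
  have key : ∀ a b : Fin n, (s a < s b ∧ π b < π a) ↔ ((a, b) = (q, p) ∨ (a < b ∧ π b < π a)) := by
    intro a b
    constructor
    · rintro ⟨h1, h2⟩
      by_cases hab : a < b
      · exact Or.inr ⟨hab, h2⟩
      · by_cases hba : b < a
        · by_cases hqp : b = p ∧ a = q
          · left; rw [hqp.1, hqp.2]
          · exact absurd (swap_adj_lt p q b a hpq hba hqp) (lt_asymm h1)
        · have : a = b := le_antisymm (not_lt.mp hba) (not_lt.mp hab)
          subst this
          exact absurd h1 (lt_irrefl _)
    · rintro (heq | ⟨hab, h2⟩)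
      · obtain ⟨rfl, rfl⟩ := Prod.mk.injEq .. ▸ heq
        · simp only [hs, Equiv.swap_apply_left, Equiv.swap_apply_right]
          exact ⟨hpltq, h⟩
      · refine ⟨?_, h2⟩
        apply swap_adj_lt p q a b hpq hab
        rintro ⟨rfl, rfl⟩
        exact absurd h (lt_asymm h2)
  have hinj : Function.Injective (fun ab : Fin n × Fin n => (s ab.1, s ab.2)) := by
    intro x y hxy
    simp only [Prod.mk.injEq] at hxy
    exact Prod.ext (s.injective hxy.1) (s.injective hxy.2)
  have h1 : (Finset.univ.filter fun ab : Fin n × Fin n => ab.1 < ab.2 ∧ (π * s) ab.2 < (π * s) ab.1)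
      = (Finset.univ.filter fun ab : Fin n × Fin n => s ab.1 < s ab.2 ∧ π ab.2 < π ab.1).map
        ⟨fun ab => (s ab.1, s ab.2), hinj⟩ := by
    ext ⟨a, b⟩
    simp only [Finset.mem_filter, Finset.mem_univ, true_and, Finset.mem_map,
      Function.Embedding.coeFn_mk, Prod.mk.injEq]
    simp only [Equiv.Perm.mul_apply]
    constructor
    · rintro ⟨h1, h2⟩
      exact ⟨(s a, s b), ⟨by simpa [hs] using h1, h2⟩, by simp [hs], by simp [hs]⟩
    · rintro ⟨⟨c, d⟩, ⟨hcd1, hcd2⟩, hc, hd⟩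
      subst hc; subst hd
      constructor
      · simpa [hs] using hcd1
      · simpa [hs] using hcd2
  have h2 : (Finset.univ.filter fun ab : Fin n × Fin n => s ab.1 < s ab.2 ∧ π ab.2 < π ab.1)
      = insert (q, p) (Finset.univ.filter fun ab : Fin n × Fin n => ab.1 < ab.2 ∧ π ab.2 < π ab.1) := by
    ext ⟨a, b⟩
    simp only [Finset.mem_filter, Finset.mem_univ, true_and, Finset.mem_insert]
    exact key a b
  have hnotmem : (q, p) ∉ (Finset.univ.filter fun ab : Fin n × Fin n => ab.1 < ab.2 ∧ π ab.2 < π ab.1) := by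
    simp only [Finset.mem_filter, Finset.mem_univ, true_and, not_and]
    intro hc
    exact absurd hc (lt_asymm hpltq)
  rw [invCount, invCount, h1, Finset.card_map, h2, Finset.card_insert_of_notMem hnotmem]

def VInv (n : ℕ) (w : Equiv.Perm (Fin n)) (x y : Fin n) : Prop :=
  y < x ∧ w.symm x < w.symm y

lemma mul_swap_symm_apply {n : ℕ} (π : Equiv.Perm (Fin n)) (p q x : Fin n) :
    (π * Equiv.swap p q).symm x = Equiv.swap p q (π.symm x) := by
  rw [← Equiv.Perm.inv_def, mul_inv_rev, Equiv.Perm.mul_apply]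
  simp [Equiv.Perm.inv_def, Equiv.swap_inv]

lemma VInv_persist {n : ℕ} (π : Equiv.Perm (Fin n)) (p q x y : Fin n)
    (hpq : (p:ℕ)+1 = q) (hasc : π p < π q) (h : VInv n π x y) :
    VInv n (π * Equiv.swap p q) x y := by
  obtain ⟨hyx, hpos⟩ := h
  refine ⟨hyx, ?_⟩
  rw [mul_swap_symm_apply, mul_swap_symm_apply]
  apply swap_adj_lt p q _ _ hpq hpos
  rintro ⟨hx, hy⟩
  have hx' : x = π p := by rw [← hx]; simp
  have hy' : y = π q := by rw [← hy]; simp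
  rw [hx', hy'] at hyx
  exact absurd hasc (lt_asymm hyx)

lemma VInv_new {n : ℕ} (π : Equiv.Perm (Fin n)) (p q : Fin n)
    (hpq : (p:ℕ)+1 = q) (hasc : π p < π q) :
    VInv n (π * Equiv.swap p q) (π q) (π p) := by
  refine ⟨hasc, ?_⟩
  rw [mul_swap_symm_apply, mul_swap_symm_apply]
  simp only [Equiv.symm_apply_apply, Equiv.swap_apply_left, Equiv.swap_apply_right]
  exact Fin.lt_def.mpr (by omega)

lemma prefixPerm_zero (n : ℕ) (ρ : List ℕ) : prefixPerm n ρ 0 = 1 := rfl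

lemma adjT_eq_swap {n j : ℕ} (h1 : 1 ≤ j) (h2 : j < n) :
    adjT n j = Equiv.swap ⟨j - 1, by omega⟩ ⟨j, h2⟩ := by
  rw [adjT, dif_pos ⟨h1, h2⟩]

lemma prefixPerm_succ (n : ℕ) (ρ : List ℕ) (k : ℕ) (h : k < ρ.length) :
    prefixPerm n ρ (k+1) = prefixPerm n ρ k * adjT n (ρ.getD k 0) := by
  have ht : ρ.take (k+1) = ρ.take k ++ [ρ.getD k 0] := by
    rw [List.take_succ]
    simp [List.getD, List.getElem?_eq_getElem h]
  rw [prefixPerm, prefixPerm, ht, List.map_append, List.prod_append]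
  simp

lemma getD_mem {ρ : List ℕ} {k : ℕ} (h : k < ρ.length) : ρ.getD k 0 ∈ ρ := by
  rw [List.getD_eq_getElem ρ 0 h]
  exact List.getElem_mem h

lemma invCount_one (n : ℕ) : invCount n 1 = 0 := by
  rw [invCount]
  convert Finset.card_empty
  ext ⟨a, b⟩
  simp only [Finset.mem_filter, Finset.mem_univ, true_and, Finset.notMem_empty, iff_false]
  simp only [Equiv.Perm.one_apply, not_and]
  exact fun h => not_lt.mpr (le_of_lt h)

lemma invCount_mul_adjT_le {n : ℕ} (π : Equiv.Perm (Fin n)) (j : ℕ)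
    (h1 : 1 ≤ j) (h2 : j < n) :
    invCount n (π * adjT n j) ≤ invCount n π + 1 := by
  rw [adjT_eq_swap h1 h2]
  set p : Fin n := ⟨j - 1, by omega⟩
  set q : Fin n := ⟨j, h2⟩
  have hpq : (p:ℕ) + 1 = q := by simp [p, q]; omega
  have hne : π p ≠ π q := fun hc => by
    have := π.injective hc
    rw [Fin.ext_iff] at this
    simp [p, q] at this
    omega
  rcases lt_or_gt_of_ne hne with hlt | hgt
  · rw [invCount_mul_swap π p q hpq hlt]
  · have h5 : (π * Equiv.swap p q) p < (π * Equiv.swap p q) q := by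
      simp only [Equiv.Perm.mul_apply, Equiv.swap_apply_left, Equiv.swap_apply_right]
      exact hgt
    have := invCount_mul_swap (π * Equiv.swap p q) p q hpq h5
    rw [mul_assoc, Equiv.swap_mul_self, mul_one] at this
    omega

lemma prefix_inv_le {n : ℕ} {w : Equiv.Perm (Fin n)} {ρ : List ℕ}
    (hρ : IsReducedDecomp n w ρ) :
    ∀ k d, k + d ≤ ρ.length →
      invCount n (prefixPerm n ρ (k + d)) ≤ invCount n (prefixPerm n ρ k) + d := by
  intro k d
  induction d with
  | zero => simp
  | succ d ih =>
    intro h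
    have hkd : k + d < ρ.length := by omega
    have hmem := hρ.1 _ (getD_mem hkd)
    have e1 : k + (d+1) = (k+d) + 1 := rfl
    rw [e1, prefixPerm_succ n ρ (k+d) hkd]
    have := invCount_mul_adjT_le (prefixPerm n ρ (k+d)) _ hmem.1 hmem.2
    have := ih (by omega)
    omega

lemma prefix_inv_eq {n : ℕ} {w : Equiv.Perm (Fin n)} {ρ : List ℕ}
    (hρ : IsReducedDecomp n w ρ) (k : ℕ) (hk : k ≤ ρ.length) :
    invCount n (prefixPerm n ρ k) = k := by
  have hL : prefixPerm n ρ ρ.length = w := by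
    rw [prefixPerm, List.take_length]
    exact hρ.2.1
  have h1 := prefix_inv_le hρ 0 k (by omega)
  rw [Nat.zero_add, prefixPerm_zero, invCount_one] at h1
  have h2 := prefix_inv_le hρ k (ρ.length - k) (by omega)
  have hk' : k + (ρ.length - k) = ρ.length := by omega
  rw [hk', hL, ← hρ.2.2] at h2
  omega

lemma red_step {n : ℕ} {w : Equiv.Perm (Fin n)} {ρ : List ℕ}
    (hρ : IsReducedDecomp n w ρ) (k : ℕ) (hk : k < ρ.length)
    (p q : Fin n) (hp : (p:ℕ) = ρ.getD k 0 - 1) (hq : (q:ℕ) = ρ.getD k 0) :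
    (p:ℕ) + 1 = (q:ℕ) ∧ prefixPerm n ρ k p < prefixPerm n ρ k q ∧
      prefixPerm n ρ (k+1) = prefixPerm n ρ k * Equiv.swap p q := by
  obtain ⟨h1, h2⟩ := hρ.1 _ (getD_mem hk)
  have hpq : (p:ℕ) + 1 = q := by omega
  have hswap : adjT n (ρ.getD k 0) = Equiv.swap p q := by
    rw [adjT_eq_swap h1 h2]
    congr 1
    · exact Fin.ext (show ρ.getD k 0 - 1 = (p:ℕ) by omega)
    · exact Fin.ext (show ρ.getD k 0 = (q:ℕ) by omega)
  have hrec : prefixPerm n ρ (k+1) = prefixPerm n ρ k * Equiv.swap p q := by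
    rw [prefixPerm_succ n ρ k hk, hswap]
  refine ⟨hpq, ?_, hrec⟩
  by_contra hcon
  have hne : prefixPerm n ρ k p ≠ prefixPerm n ρ k q := fun hc => by
    have := (prefixPerm n ρ k).injective hc
    rw [Fin.ext_iff] at this; omega
  have hgt : prefixPerm n ρ k q < prefixPerm n ρ k p := by
    rcases lt_or_gt_of_ne hne with h | h
    · exact absurd h hcon
    · exact h
  have h5 : (prefixPerm n ρ k * Equiv.swap p q) p < (prefixPerm n ρ k * Equiv.swap p q) q := by
    simp only [Equiv.Perm.mul_apply, Equiv.swap_apply_left, Equiv.swap_apply_right]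
    exact hgt
  have h6 := invCount_mul_swap (prefixPerm n ρ k * Equiv.swap p q) p q hpq h5
  rw [mul_assoc, Equiv.swap_mul_self, mul_one, ← hrec] at h6
  have e1 := prefix_inv_eq hρ k (le_of_lt hk)
  have e2 := prefix_inv_eq hρ (k+1) hk
  omega

lemma VInv_persist_many {n : ℕ} {w : Equiv.Perm (Fin n)} {ρ : List ℕ}
    (hρ : IsReducedDecomp n w ρ) (x y : Fin n) (k : ℕ) :
    ∀ d, k + d ≤ ρ.length → VInv n (prefixPerm n ρ k) x y →
      VInv n (prefixPerm n ρ (k + d)) x y := by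
  intro d
  induction d with
  | zero => exact fun _ h => h
  | succ d ih =>
    intro hle h
    have hkd : k + d < ρ.length := by omega
    obtain ⟨h1, h2⟩ := hρ.1 _ (getD_mem hkd)
    obtain ⟨hpq, hasc, hrec⟩ := red_step hρ (k+d) hkd
      ⟨ρ.getD (k+d) 0 - 1, by omega⟩ ⟨ρ.getD (k+d) 0, h2⟩ rfl rfl
    have hres := VInv_persist _ _ _ _ _ hpq hasc (ih (by omega) h)
    rw [← hrec] at hres
    exact hres

set_option maxHeartbeats 1000000 in
/-- If some reduced decomposition of `w` contains the consecutive
substring `(i+1, i, i+1, i-1, i, i+1)` with `2 ≤ i ≤ n-2`, then `w` contains a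
4321-pattern. -/
theorem substring_implies_4321_pattern
    (n : ℕ) (w : Equiv.Perm (Fin n)) (ρ : List ℕ) (i : ℕ)
    (hi : 2 ≤ i ∧ i ≤ n - 2)
    (hρ : IsReducedDecomp n w ρ)
    (hsub : ∃ l r : List ℕ,
      ρ = l ++ [i + 1, i, i + 1, i - 1, i, i + 1] ++ r) :
    ∃ a b c d : Fin n, a < b ∧ b < c ∧ c < d ∧
      w d < w c ∧ w c < w b ∧ w b < w a := by
  obtain ⟨hi2, hin⟩ := hi
  have hn4 : 4 ≤ n := by omega
  obtain ⟨l, r, rfl⟩ := hsub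
  set mid : List ℕ := [i + 1, i, i + 1, i - 1, i, i + 1] with hmid
  set ρ2 : List ℕ := l ++ mid ++ r with hρ2
  set m := l.length with hm
  have hL : ρ2.length = m + 6 + r.length := by
    simp only [hρ2, hmid, List.length_append, List.length_cons, List.length_nil]; omega
  have hget : ∀ t, t < 6 → ρ2.getD (m + t) 0 = mid.getD t 0 := by
    intro t ht
    rw [hρ2, List.append_assoc, List.getD_append_right _ _ _ _ (by omega),
      Nat.add_sub_cancel_left, List.getD_append _ _ _ _ (by rw [hmid]; simp; omega)]
  have g0 : ρ2.getD m 0 = i + 1 := by have := hget 0 (by omega); simpa [hmid] using this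
  have g1 : ρ2.getD (m+1) 0 = i := by have := hget 1 (by omega); simpa [hmid] using this
  have g2 : ρ2.getD (m+2) 0 = i + 1 := by have := hget 2 (by omega); simpa [hmid] using this
  have g3 : ρ2.getD (m+3) 0 = i - 1 := by have := hget 3 (by omega); simpa [hmid] using this
  have g4 : ρ2.getD (m+4) 0 = i := by have := hget 4 (by omega); simpa [hmid] using this
  have g5 : ρ2.getD (m+5) 0 = i + 1 := by have := hget 5 (by omega); simpa [hmid] using this
  obtain ⟨P0, hP0⟩ : ∃ P : Fin n, (P:ℕ) = i - 2 := ⟨⟨i - 2, by omega⟩, rfl⟩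
  obtain ⟨P1, hP1⟩ : ∃ P : Fin n, (P:ℕ) = i - 1 := ⟨⟨i - 1, by omega⟩, rfl⟩
  obtain ⟨P2, hP2⟩ : ∃ P : Fin n, (P:ℕ) = i := ⟨⟨i, by omega⟩, rfl⟩
  obtain ⟨P3, hP3⟩ : ∃ P : Fin n, (P:ℕ) = i + 1 := ⟨⟨i + 1, by omega⟩, rfl⟩
  have ne01 : P0 ≠ P1 := by rw [Ne, Fin.ext_iff, hP0, hP1]; omega
  have ne02 : P0 ≠ P2 := by rw [Ne, Fin.ext_iff, hP0, hP2]; omega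
  have ne03 : P0 ≠ P3 := by rw [Ne, Fin.ext_iff, hP0, hP3]; omega
  have ne12 : P1 ≠ P2 := by rw [Ne, Fin.ext_iff, hP1, hP2]; omega
  have ne13 : P1 ≠ P3 := by rw [Ne, Fin.ext_iff, hP1, hP3]; omega
  have ne23 : P2 ≠ P3 := by rw [Ne, Fin.ext_iff, hP2, hP3]; omega
  let π : ℕ → Equiv.Perm (Fin n) := fun t => prefixPerm n ρ2 (m + t)
  -- the six reduced steps
  obtain ⟨hpq0, asc0, rec0⟩ := red_step hρ m (by omega) P2 P3
    (by rw [hP2, g0]; omega) (by rw [hP3, g0])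
  obtain ⟨hpq1, asc1, rec1⟩ := red_step hρ (m+1) (by omega) P1 P2
    (by rw [hP1, g1]) (by rw [hP2, g1])
  obtain ⟨hpq2, asc2, rec2⟩ := red_step hρ (m+2) (by omega) P2 P3
    (by rw [hP2, g2]; omega) (by rw [hP3, g2])
  obtain ⟨hpq3, asc3, rec3⟩ := red_step hρ (m+3) (by omega) P0 P1
    (by rw [hP0, g3]; omega) (by rw [hP1, g3])
  obtain ⟨hpq4, asc4, rec4⟩ := red_step hρ (m+4) (by omega) P1 P2
    (by rw [hP1, g4]) (by rw [hP2, g4])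
  obtain ⟨hpq5, asc5, rec5⟩ := red_step hρ (m+5) (by omega) P2 P3
    (by rw [hP2, g5]; omega) (by rw [hP3, g5])
  -- restate with π
  have rec0' : π 1 = π 0 * Equiv.swap P2 P3 := rec0
  have rec1' : π 2 = π 1 * Equiv.swap P1 P2 := rec1
  have rec2' : π 3 = π 2 * Equiv.swap P2 P3 := rec2
  have rec3' : π 4 = π 3 * Equiv.swap P0 P1 := rec3
  have rec4' : π 5 = π 4 * Equiv.swap P1 P2 := rec4
  have rec5' : π 6 = π 5 * Equiv.swap P2 P3 := rec5
  have asc0' : π 0 P2 < π 0 P3 := asc0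
  have asc1' : π 1 P1 < π 1 P2 := asc1
  have asc2' : π 2 P2 < π 2 P3 := asc2
  have asc3' : π 3 P0 < π 3 P1 := asc3
  have asc4' : π 4 P1 < π 4 P2 := asc4
  have asc5' : π 5 P2 < π 5 P3 := asc5
  -- value computations
  have e1P0 : π 1 P0 = π 0 P0 := by
    rw [rec0', Equiv.Perm.mul_apply, Equiv.swap_apply_of_ne_of_ne ne02 ne03]
  have e1P1 : π 1 P1 = π 0 P1 := by
    rw [rec0', Equiv.Perm.mul_apply, Equiv.swap_apply_of_ne_of_ne ne12 ne13]
  have e1P3 : π 1 P3 = π 0 P2 := by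
    rw [rec0', Equiv.Perm.mul_apply, Equiv.swap_apply_right]
  have e2P0 : π 2 P0 = π 0 P0 := by
    rw [rec1', Equiv.Perm.mul_apply, Equiv.swap_apply_of_ne_of_ne ne01 ne02, e1P0]
  have e2P2 : π 2 P2 = π 0 P1 := by
    rw [rec1', Equiv.Perm.mul_apply, Equiv.swap_apply_right, e1P1]
  have e2P3 : π 2 P3 = π 0 P2 := by
    rw [rec1', Equiv.Perm.mul_apply,
      Equiv.swap_apply_of_ne_of_ne (Ne.symm ne13) (Ne.symm ne23), e1P3]
  have e3P0 : π 3 P0 = π 0 P0 := by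
    rw [rec2', Equiv.Perm.mul_apply, Equiv.swap_apply_of_ne_of_ne ne02 ne03, e2P0]
  have e3P3 : π 3 P3 = π 0 P1 := by
    rw [rec2', Equiv.Perm.mul_apply, Equiv.swap_apply_right, e2P2]
  have e4P1 : π 4 P1 = π 0 P0 := by
    rw [rec3', Equiv.Perm.mul_apply, Equiv.swap_apply_right, e3P0]
  have e4P3 : π 4 P3 = π 0 P1 := by
    rw [rec3', Equiv.Perm.mul_apply,
      Equiv.swap_apply_of_ne_of_ne (Ne.symm ne03) (Ne.symm ne13), e3P3]
  have e5P2 : π 5 P2 = π 0 P0 := by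
    rw [rec4', Equiv.Perm.mul_apply, Equiv.swap_apply_right, e4P1]
  have e5P3 : π 5 P3 = π 0 P1 := by
    rw [rec4', Equiv.Perm.mul_apply,
      Equiv.swap_apply_of_ne_of_ne (Ne.symm ne13) (Ne.symm ne23), e4P3]
  -- value order facts
  have ord32 : π 0 P2 < π 0 P3 := asc0'
  have ord21 : π 0 P1 < π 0 P2 := by rw [e2P2, e2P3] at asc2'; exact asc2'
  have ord10 : π 0 P0 < π 0 P1 := by rw [e5P2, e5P3] at asc5'; exact asc5'
  -- build the three inversions at step m+6
  have V32a : VInv n (π 1) (π 0 P3) (π 0 P2) := by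
    rw [rec0']; exact VInv_new (π 0) P2 P3 hpq0 asc0'
  have V32b : VInv n (π 2) (π 0 P3) (π 0 P2) := by
    rw [rec1']; exact VInv_persist (π 1) P1 P2 _ _ hpq1 asc1' V32a
  have V32c : VInv n (π 3) (π 0 P3) (π 0 P2) := by
    rw [rec2']; exact VInv_persist (π 2) P2 P3 _ _ hpq2 asc2' V32b
  have V32d : VInv n (π 4) (π 0 P3) (π 0 P2) := by
    rw [rec3']; exact VInv_persist (π 3) P0 P1 _ _ hpq3 asc3' V32c
  have V32e : VInv n (π 5) (π 0 P3) (π 0 P2) := by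
    rw [rec4']; exact VInv_persist (π 4) P1 P2 _ _ hpq4 asc4' V32d
  have V32f : VInv n (π 6) (π 0 P3) (π 0 P2) := by
    rw [rec5']; exact VInv_persist (π 5) P2 P3 _ _ hpq5 asc5' V32e
  have V21a : VInv n (π 3) (π 0 P2) (π 0 P1) := by
    rw [rec2', ← e2P3, ← e2P2]; exact VInv_new (π 2) P2 P3 hpq2 asc2'
  have V21b : VInv n (π 4) (π 0 P2) (π 0 P1) := by
    rw [rec3']; exact VInv_persist (π 3) P0 P1 _ _ hpq3 asc3' V21a
  have V21c : VInv n (π 5) (π 0 P2) (π 0 P1) := by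
    rw [rec4']; exact VInv_persist (π 4) P1 P2 _ _ hpq4 asc4' V21b
  have V21d : VInv n (π 6) (π 0 P2) (π 0 P1) := by
    rw [rec5']; exact VInv_persist (π 5) P2 P3 _ _ hpq5 asc5' V21c
  have V10a : VInv n (π 6) (π 0 P1) (π 0 P0) := by
    rw [rec5', ← e5P3, ← e5P2]; exact VInv_new (π 5) P2 P3 hpq5 asc5'
  -- persist to the end of the word
  have hw : prefixPerm n ρ2 ρ2.length = w := by
    rw [prefixPerm, List.take_length]; exact hρ.2.1
  have hidx : (m + 6) + r.length = ρ2.length := by omega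
  have persist : ∀ x y : Fin n, VInv n (π 6) x y → VInv n w x y := by
    intro x y h
    have := VInv_persist_many hρ x y (m + 6) r.length (by omega) h
    rw [hidx, hw] at this
    exact this
  have W32 := persist _ _ V32f
  have W21 := persist _ _ V21d
  have W10 := persist _ _ V10a
  refine ⟨w.symm (π 0 P3), w.symm (π 0 P2), w.symm (π 0 P1), w.symm (π 0 P0),
    W32.2, W21.2, W10.2, ?_, ?_, ?_⟩ <;>
    simp only [Equiv.apply_symm_apply]
  · exact ord10
  · exact ord21
  · exact ord32
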